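/- Fix an integer C, and for f ∈ ℤ[t,t⁻¹] let f*(t) = t^C · f(t⁻¹) and let T(f) be the unique Laurent polynomial with (1 − t)·T(f) = f − t·f*. Then for every f ∈ ℤ[t,t⁻¹]: (i) (T(f))* = T(f), and (ii) T(T(f)) = T(f), i.e. T is idempotent. -/

import Mathlib

open LaurentPolynomial

/-- `f*(t) = t^C · f(t⁻¹)`, where `t ↦ t⁻¹` is the ring involution of `ℤ[t,t⁻¹]`. -/
noncomputable def fstar (C : ℤ) (f : LaurentPolynomial ℤ) : LaurentPolynomial ℤ :=
  T C * invert f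

/-- Fix an integer `C`; `T(f)` denotes the unique Laurent polynomial with
`(1 − t)·T(f) = f − t·f*`.  Then (i) `(T(f))* = T(f)`, and (ii) `T(T(f)) = T(f)`:
any `h` with `(1 − t)·h = T(f) − t·(T(f))*` equals `T(f)`. -/
theorem stmt_6 (C : ℤ) (f g : LaurentPolynomial ℤ)
    (hg : (1 - T 1) * g = f - T 1 * fstar C f) :
    fstar C g = g ∧ ∀ h : LaurentPolynomial ℤ, (1 - T 1) * h = g - T 1 * fstar C g → h = g := by
  have hne : (1 - T 1 : LaurentPolynomial ℤ) ≠ 0 := by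
    have hT : (T 1 : LaurentPolynomial ℤ) ≠ 1 := by
      rw [← T_zero]
      intro h
      have h1 := congrArg (fun p : LaurentPolynomial ℤ => p.coeff 1) h
      simp only [T_apply] at h1; norm_num at h1
    exact sub_ne_zero.mpr fun h => hT h.symm
  have hab : (T 1 : LaurentPolynomial ℤ) * T (-1) = 1 := by
    rw [← T_add]; norm_num
  have hcd : (T C : LaurentPolynomial ℤ) * T (-C) = 1 := by
    rw [← T_add]; norm_num
  have hinv := congrArg invert hg
  simp only [map_mul, map_sub, map_one, invert_T, fstar] at hinv
  rw [show invert (invert f) = f from involutive_invert f] at hinv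
  simp only [fstar] at hg ⊢
  have h2 : (1 - T 1) * (T C * invert g) = (1 - T 1) * g := by
    linear_combination (-(T 1 * T C : LaurentPolynomial ℤ)) * hinv - hg
      + (f * (T C * T (-C)) - T C * invert g) * hab + f * hcd
  have h1 : T C * invert g = g := mul_left_cancel₀ hne h2
  refine ⟨h1, fun h hh => ?_⟩
  rw [h1] at hh
  have : (1 - T 1) * h = (1 - T 1) * g := by rw [hh]; ring
  exact mul_left_cancel₀ hne this
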